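/- Let A be a symmetric n×n real matrix satisfying λ|ξ|² ≤ (Aξ·ξ) ≤ L|ξ|² for all ξ ∈ ℝⁿ, where 0 < λ ≤ L. Let ν ∈ ℝⁿ be a unit vector. Then for every vector ξ ∈ ℝⁿ, (Aξ·ξ) ≥ (1/L)(Aξ·ν)² + λ|ξ_S|², where ξ_S := ξ − (ξ·ν)ν is the component of ξ orthogonal to ν. -/

import Mathlib

open Metric Set

noncomputable section

/-- **Radial/spherical decomposition of an elliptic quadratic form**
(Lemma 2.5): if `A` is a symmetric matrix with `λ|ξ|² ≤ (Aξ·ξ) ≤ L|ξ|²` and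
`ν` is a unit vector, then for every `ξ`,
`(Aξ·ξ) ≥ (1/L)(Aξ·ν)² + λ|ξ_S|²`, where `ξ_S = ξ - (ξ·ν)ν`. -/
theorem quadratic_form_radial_spherical_split
    (n : ℕ) (lam L : ℝ) (hlam : 0 < lam) (hlL : lam ≤ L)
    (A : Matrix (Fin n) (Fin n) ℝ) (hsym : A.IsSymm)
    (hell : ∀ ξ : EuclideanSpace ℝ (Fin n),
      lam * ‖ξ‖ ^ 2 ≤ ∑ i, ∑ j, A i j * ξ i * ξ j ∧
      ∑ i, ∑ j, A i j * ξ i * ξ j ≤ L * ‖ξ‖ ^ 2)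
    (ν : EuclideanSpace ℝ (Fin n)) (hν : ‖ν‖ = 1)
    (ξ : EuclideanSpace ℝ (Fin n)) :
    (1 / L) * (∑ i, ∑ j, A i j * ξ i * ν j) ^ 2 +
        lam * ‖ξ - (inner ℝ ξ ν : ℝ) • ν‖ ^ 2 ≤
      ∑ i, ∑ j, A i j * ξ i * ξ j := by
  have hL : 0 < L := lt_of_lt_of_le hlam hlL
  set t : ℝ := (inner ℝ ξ ν : ℝ) with ht
  set Bxx := ∑ i, ∑ j, A i j * ξ i * ξ j with hBxx
  set Bxv := ∑ i, ∑ j, A i j * ξ i * ν j with hBxv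
  set Bvv := ∑ i, ∑ j, A i j * ν i * ν j with hBvv
  set c : ℝ := Bxv / L with hc
  -- symmetry
  have hsymm : ∀ i j, A j i = A i j := fun i j => congrFun (congrFun hsym i) j
  have hBvx : (∑ i, ∑ j, A i j * ν i * ξ j) = Bxv := by
    rw [Finset.sum_comm, hBxv]
    refine Finset.sum_congr rfl fun i _ => Finset.sum_congr rfl fun j _ => ?_
    rw [hsymm i j]; ring
  -- expansion of the quadratic form at ξ - d • ν
  have expand : ∀ d : ℝ,
      (∑ i, ∑ j, A i j * (ξ - d • ν) i * (ξ - d • ν) j)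
        = Bxx - 2 * d * Bxv + d ^ 2 * Bvv := by
    intro d
    have : (∑ i, ∑ j, A i j * (ξ - d • ν) i * (ξ - d • ν) j)
        = ∑ i, ∑ j, (A i j * ξ i * ξ j - d * (A i j * ξ i * ν j)
            - d * (A i j * ν i * ξ j) + d ^ 2 * (A i j * ν i * ν j)) := by
      refine Finset.sum_congr rfl fun i _ => Finset.sum_congr rfl fun j _ => ?_
      simp only [PiLp.sub_apply, PiLp.smul_apply, smul_eq_mul]
      ring
    rw [this]
    simp only [Finset.sum_add_distrib, Finset.sum_sub_distrib, ← Finset.mul_sum]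
    rw [hBvx, ← hBxx, ← hBxv, ← hBvv]
    ring
  -- norm expansion
  have hnorm : ∀ d : ℝ, ‖ξ - d • ν‖ ^ 2 = ‖ξ‖ ^ 2 - 2 * d * t + d ^ 2 := by
    intro d
    rw [norm_sub_sq_real, real_inner_smul_right, norm_smul, ← ht]
    simp [hν, mul_pow]
    ring
  have h1 := (hell (ξ - c • ν)).1
  rw [expand c, hnorm c] at h1
  have h2 := (hell ν).2
  rw [← hBvv, hν] at h2
  have h3 := (hell ν).1
  rw [← hBvv, hν] at h3
  have hxs : ‖ξ - t • ν‖ ^ 2 = ‖ξ‖ ^ 2 - 2 * t * t + t ^ 2 := hnorm t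
  rw [hxs]
  have hc2 : c ^ 2 * Bvv ≤ Bxv ^ 2 / L := by
    rw [hc]
    rw [div_pow]
    calc Bxv ^ 2 / L ^ 2 * Bvv ≤ Bxv ^ 2 / L ^ 2 * L := by
          apply mul_le_mul_of_nonneg_left (by simpa using h2) (by positivity)
      _ = Bxv ^ 2 / L := by field_simp
  have hcL : c * L = Bxv := by rw [hc]; field_simp
  have hcB : c * Bxv = Bxv ^ 2 / L := by rw [hc]; field_simp
  have hkey : 0 ≤ lam * (c - t) ^ 2 := mul_nonneg hlam.le (sq_nonneg _)
  have goal2 : Bxv ^ 2 / L + lam * (‖ξ‖ ^ 2 - 2 * t * t + t ^ 2) ≤ Bxx := by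
    nlinarith [h1, hc2, hcB, hkey]
  calc 1 / L * Bxv ^ 2 + lam * (‖ξ‖ ^ 2 - 2 * t * t + t ^ 2)
      = Bxv ^ 2 / L + lam * (‖ξ‖ ^ 2 - 2 * t * t + t ^ 2) := by ring
    _ ≤ Bxx := goal2
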